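/- Let V be a completely distributive quantale and (A, Ā) a V-category. (i) If δ : P(A) × A → V satisfies the modularity axiom (inf_{t ∈ T} sup_{s ∈ S} Ā(s,t)) ⊗ δ(T,x) ⊗ Ā(x,y) ≤ δ(S,y) for all S, T ⊆ A and x, y ∈ A, then α(𝔵,x) := inf_{S ∈ 𝔵} δ(S,x) satisfies (UĀ)(𝔵,𝔶) ⊗ α(𝔶,x) ⊗ Ā(x,y) ≤ α(𝔵,y) for all ultrafilters 𝔵, 𝔶 on A and x, y ∈ A. (ii) Conversely, if α : UA × A → V satisfies (UĀ)(𝔵,𝔶) ⊗ α(𝔶,x) ⊗ Ā(x,y) ≤ α(𝔵,y) for all 𝔵, 𝔶, x, y, then δ(S,x) := sup{ α(𝔶,x) | 𝔶 ∈ UA with S ∈ 𝔶 } satisfies (inf_{t ∈ T} sup_{s ∈ S} Ā(s,t)) ⊗ δ(T,x) ⊗ Ā(x,y) ≤ δ(S,y) for all S, T, x, y. -/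

import Mathlib

/-- The Barr extension of a `V`-relation `K : X ⇸ Y` to ultrafilters:
`(UK)(𝔛,𝔜) = inf_{σ ∈ 𝔛, τ ∈ 𝔜} sup_{x ∈ σ, y ∈ τ} K(x,y)`. -/
def Urel {V : Type*} [CompleteLattice V] {X Y : Type*} (K : X → Y → V)
    (𝔛 : Ultrafilter X) (𝔜 : Ultrafilter Y) : V :=
  ⨅ σ : Set X, ⨅ _ : σ ∈ 𝔛, ⨅ τ : Set Y, ⨅ _ : τ ∈ 𝔜, ⨆ x ∈ σ, ⨆ y ∈ τ, K x y

/-- `v` is totally below `b`. -/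
def TB {V : Type*} [CompleteLattice V] (v b : V) : Prop :=
  ∀ S : Set V, b ≤ sSup S → ∃ a ∈ S, v ≤ a

lemma TB.le_iSup {V : Type*} [CompleteLattice V] {v b : V} (h : TB v b)
    {ι : Sort*} {f : ι → V} (hb : b ≤ ⨆ i, f i) : ∃ i, v ≤ f i := by
  obtain ⟨a, ha, hva⟩ := h (Set.range f) (by rwa [sSup_range])
  obtain ⟨i, rfl⟩ := ha
  exact ⟨i, hva⟩

lemma le_iSup_TB {V : Type*} [CompletelyDistribLattice V] (b : V) :
    b ≤ ⨆ v : {v : V // TB v b}, (v : V) := by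
  have h : b ≤ ⨅ S : {S : Set V // b ≤ sSup S}, ⨆ a : S.1, (a : V) :=
    le_iInf fun S => S.2.trans (by rw [sSup_eq_iSup'])
  rw [iInf_iSup_eq] at h
  refine h.trans (iSup_le fun g => ?_)
  refine le_iSup_of_le ⟨⨅ S, ((g S : V)), ?_⟩ le_rfl
  intro T hT
  exact ⟨g ⟨T, hT⟩, (g ⟨T, hT⟩).2, iInf_le (fun S : {S : Set V // b ≤ sSup S} => (g S : V)) ⟨T, hT⟩⟩

lemma iSup_mul' {V : Type*} [CompleteLattice V] [Mul V]
    (hr : ∀ (v : V) (S : Set V), sSup S * v = ⨆ w ∈ S, w * v)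
    {ι : Sort*} (f : ι → V) (c : V) : (⨆ i, f i) * c = ⨆ i, f i * c := by
  rw [← sSup_range, hr, iSup_range]

lemma mul_iSup' {V : Type*} [CompleteLattice V] [Mul V]
    (hl : ∀ (v : V) (S : Set V), v * sSup S = ⨆ w ∈ S, v * w)
    {ι : Sort*} (f : ι → V) (c : V) : c * (⨆ i, f i) = ⨆ i, c * f i := by
  rw [← sSup_range, hl, iSup_range]

/-- Part of **Theorem 4.8** of the paper: over a completely distributive quantale,
the correspondence `δ ↦ α := inf_{S ∈ 𝔵} δ(S,·)` and
`α ↦ δ := sup_{S ∈ 𝔶} α(𝔶,·)` preserves modularity with respect to a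
`V`-category structure `Ā` on `A`, in both directions. -/
theorem modularity_transfer {V : Type*} [CompletelyDistribLattice V] [Monoid V]
    (hl : ∀ (v : V) (S : Set V), v * sSup S = ⨆ w ∈ S, v * w)
    (hr : ∀ (v : V) (S : Set V), sSup S * v = ⨆ w ∈ S, w * v)
    {A : Type*} (Abar : A → A → V)
    (hA₁ : ∀ x, (1 : V) ≤ Abar x x)
    (hA₂ : ∀ x y z, Abar x y * Abar y z ≤ Abar x z) :
    (∀ δ : Set A → A → V,
      (∀ (S T : Set A) (x y : A),
        (⨅ t ∈ T, ⨆ s ∈ S, Abar s t) * δ T x * Abar x y ≤ δ S y) →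
      ∀ (𝔵 𝔶 : Ultrafilter A) (x y : A),
        Urel Abar 𝔵 𝔶 * (⨅ S : Set A, ⨅ _ : S ∈ 𝔶, δ S x) * Abar x y ≤
          ⨅ S : Set A, ⨅ _ : S ∈ 𝔵, δ S y) ∧
    (∀ α : Ultrafilter A → A → V,
      (∀ (𝔵 𝔶 : Ultrafilter A) (x y : A),
        Urel Abar 𝔵 𝔶 * α 𝔶 x * Abar x y ≤ α 𝔵 y) →
      ∀ (S T : Set A) (x y : A),
        (⨅ t ∈ T, ⨆ s ∈ S, Abar s t) *
            (⨆ 𝔶 : Ultrafilter A, ⨆ _ : T ∈ 𝔶, α 𝔶 x) * Abar x y ≤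
          ⨆ 𝔶 : Ultrafilter A, ⨆ _ : S ∈ 𝔶, α 𝔶 y) := by
  -- monotonicity of multiplication
  have monoR : ∀ {a b : V} (c : V), a ≤ b → a * c ≤ b * c := by
    intro a b c h
    have h2 := hr c {a, b}
    rw [sSup_pair, sup_eq_right.mpr h] at h2
    rw [h2]
    exact le_iSup₂_of_le a (Set.mem_insert _ _) le_rfl
  have monoL : ∀ (c : V) {a b : V}, a ≤ b → c * a ≤ c * b := by
    intro c a b h
    have h2 := hl c {a, b}
    rw [sSup_pair, sup_eq_right.mpr h] at h2
    rw [h2]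
    exact le_iSup₂_of_le a (Set.mem_insert _ _) le_rfl
  constructor
  · -- part (i)
    intro δ hδ 𝔵 𝔶 x y
    refine le_iInf fun S => le_iInf fun hS => ?_
    refine le_trans (monoR _ (monoR _ (le_iSup_TB (Urel Abar 𝔵 𝔶)))) ?_
    rw [iSup_mul' hr, iSup_mul' hr]
    refine iSup_le fun v => ?_
    set Tv : Set A := {t | (v : V) ≤ ⨆ s ∈ S, Abar s t} with hTvdef
    have hTv𝔶 : Tv ∈ 𝔶 := by
      by_contra hne
      have hc : Tvᶜ ∈ 𝔶 := Ultrafilter.compl_mem_iff_notMem.mpr hne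
      have hU : Urel Abar 𝔵 𝔶 ≤ ⨆ t : ↥Tvᶜ, ⨆ s ∈ S, Abar s t.1 := by
        refine le_trans (iInf_le_of_le S (iInf_le_of_le hS
          (iInf_le_of_le Tvᶜ (iInf_le _ hc)))) ?_
        exact iSup₂_le fun s hs => iSup₂_le fun t ht =>
          le_iSup_of_le ⟨t, ht⟩ (le_iSup₂_of_le s hs le_rfl)
      obtain ⟨t, hvt⟩ := v.2.le_iSup hU
      exact t.2 hvt
    have h1 : (v : V) ≤ ⨅ t ∈ Tv, ⨆ s ∈ S, Abar s t := le_iInf₂ fun t ht => ht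
    have h2 : (⨅ T : Set A, ⨅ _ : T ∈ 𝔶, δ T x) ≤ δ Tv x :=
      iInf_le_of_le Tv (iInf_le _ hTv𝔶)
    calc (v : V) * (⨅ T : Set A, ⨅ _ : T ∈ 𝔶, δ T x) * Abar x y
        ≤ (⨅ t ∈ Tv, ⨆ s ∈ S, Abar s t) * δ Tv x * Abar x y :=
          monoR _ (le_trans (monoL _ h2) (monoR _ h1))
      _ ≤ δ S y := hδ S Tv x y
  · -- part (ii)
    intro α hα S T x y
    simp only [mul_iSup' hl, iSup_mul' hr]
    refine iSup_le fun 𝔶 => iSup_le fun hT => ?_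
    refine le_trans (monoR _ (monoR _ (le_iSup_TB (⨅ t ∈ T, ⨆ s ∈ S, Abar s t)))) ?_
    rw [iSup_mul' hr, iSup_mul' hr]
    refine iSup_le fun v => ?_
    obtain ⟨t0, _⟩ := 𝔶.nonempty_of_mem hT
    haveI : Nonempty A := ⟨t0⟩
    have hch : ∀ t : A, ∃ s : A, t ∈ T → s ∈ S ∧ (v : V) ≤ Abar s t := by
      intro t
      by_cases ht : t ∈ T
      · have hw : (⨅ t ∈ T, ⨆ s ∈ S, Abar s t) ≤ ⨆ s : ↥S, Abar s.1 t := by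
          refine le_trans (iInf_le_of_le t (iInf_le _ ht)) ?_
          exact iSup₂_le fun s hs => le_iSup_of_le ⟨s, hs⟩ le_rfl
        obtain ⟨s, hs⟩ := v.2.le_iSup hw
        exact ⟨s.1, fun _ => ⟨s.2, hs⟩⟩
      · exact ⟨Classical.arbitrary A, fun h => absurd h ht⟩
    choose g hg using hch
    set 𝔵 := Ultrafilter.map g 𝔶 with h𝔵
    have hS𝔵 : S ∈ 𝔵 := by
      rw [h𝔵, Ultrafilter.mem_map]
      exact Filter.mem_of_superset hT fun t ht => (hg t ht).1
    have hvU : (v : V) ≤ Urel Abar 𝔵 𝔶 := by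
      refine le_iInf fun σ => le_iInf fun hσ => le_iInf fun τ => le_iInf fun hτ => ?_
      have hmem : g ⁻¹' σ ∩ (τ ∩ T) ∈ 𝔶 :=
        Filter.inter_mem (Ultrafilter.mem_map.mp hσ) (Filter.inter_mem hτ hT)
      obtain ⟨t, htσ, htτ, htT⟩ := 𝔶.nonempty_of_mem hmem
      exact le_iSup₂_of_le (g t) htσ (le_iSup₂_of_le t htτ (hg t htT).2)
    calc (v : V) * α 𝔶 x * Abar x y
        ≤ Urel Abar 𝔵 𝔶 * α 𝔶 x * Abar x y := monoR _ (monoR _ hvU)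
      _ ≤ α 𝔵 y := hα 𝔵 𝔶 x y
      _ ≤ ⨆ 𝔷 : Ultrafilter A, ⨆ _ : S ∈ 𝔷, α 𝔷 y := le_iSup₂_of_le 𝔵 hS𝔵 le_rfl
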